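/- Let R = diag(r₁,…,r_N) with r_i ≥ r̲ > 0 for all i. Then the smallest eigenvalue of the symmetric positive definite matrix BRBᵀ satisfies λ_min(BRBᵀ) ≥ r̲/(4N²); equivalently, xᵀBRBᵀx ≥ (r̲/(4N²))·|x|₂² for every x ∈ ℝ^N. -/

import Mathlib

open Matrix MeasureTheory Real

/-- The N×N matrix with 1 on the diagonal and -1 on the first superdiagonal. -/
noncomputable def Bmat (N : ℕ) : Matrix (Fin N) (Fin N) ℝ :=
  Matrix.of fun i j => if j = i then 1 else if (j : ℕ) = (i : ℕ) + 1 then -1 else 0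

/-- Entrywise absolute value of `Bmat N`. -/
noncomputable def absB (N : ℕ) : Matrix (Fin N) (Fin N) ℝ :=
  Matrix.of fun i j => |Bmat N i j|

/-- Euclidean norm of a vector in ℝ^N. -/
noncomputable def norm2 {N : ℕ} (x : Fin N → ℝ) : ℝ := Real.sqrt (x ⬝ᵥ x)

/-- The Hamiltonian H(p, Δ) = ½(p − v₀M𝟙)ᵀ M⁻¹ (p − v₀M𝟙) + ½ Δᵀ A Δ. -/
noncomputable def Ham {N : ℕ} (v0 : ℝ) (m a : Fin N → ℝ) (p Δ : Fin N → ℝ) : ℝ :=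
  (1/2) * ((p - v0 • (Matrix.diagonal m *ᵥ fun _ => 1)) ⬝ᵥ
      (Matrix.diagonal (fun i => (m i)⁻¹) *ᵥ (p - v0 • (Matrix.diagonal m *ᵥ fun _ => 1)))) +
  (1/2) * (Δ ⬝ᵥ (Matrix.diagonal a *ᵥ Δ))

lemma y_zero (N : ℕ) (x : Fin N → ℝ) (h : 0 < N) :
    ((Bmat N)ᵀ *ᵥ x) ⟨0, h⟩ = x ⟨0, h⟩ := by
  simp only [Matrix.mulVec, Matrix.transpose_apply, Bmat, Matrix.of_apply, dotProduct]
  have : ∀ j : Fin N,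
      (if (⟨0, h⟩ : Fin N) = j then (1:ℝ) else if ((0:ℕ)) = (j:ℕ) + 1 then -1 else 0) * x j
        = if j = ⟨0, h⟩ then x j else 0 := by
    intro j
    rcases eq_or_ne j (⟨0, h⟩ : Fin N) with hj | hj
    · subst hj; simp
    · rw [if_neg (Ne.symm hj), if_neg (by omega), if_neg hj, zero_mul]
  rw [Finset.sum_congr rfl (fun j _ => this j), Finset.sum_ite_eq' Finset.univ,
    if_pos (Finset.mem_univ _)]

lemma y_succ (N : ℕ) (x : Fin N → ℝ) (n : ℕ) (h : n + 1 < N) :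
    ((Bmat N)ᵀ *ᵥ x) ⟨n+1, h⟩ = x ⟨n+1, h⟩ - x ⟨n, by omega⟩ := by
  simp only [Matrix.mulVec, Matrix.transpose_apply, Bmat, Matrix.of_apply, dotProduct]
  have : ∀ j : Fin N,
      (if (⟨n+1, h⟩ : Fin N) = j then (1:ℝ) else if ((n+1:ℕ)) = (j:ℕ) + 1 then -1 else 0) * x j
        = (if j = ⟨n+1, h⟩ then x j else 0) + (if j = ⟨n, by omega⟩ then -x j else 0) := by
    intro j
    rcases eq_or_ne j (⟨n+1, h⟩ : Fin N) with hj | hj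
    · subst hj
      rw [if_pos rfl, if_pos rfl, if_neg (by simp only [Fin.ext_iff]; omega)]
      ring
    · rw [if_neg (Ne.symm hj), if_neg hj]
      rcases eq_or_ne j (⟨n, by omega⟩ : Fin N) with hj2 | hj2
      · subst hj2; rw [if_pos (by simp), if_pos rfl]; ring
      · rw [if_neg (fun hc => hj2 (Fin.ext (by simp only [Fin.val_mk] at hc ⊢; omega))), if_neg hj2]; ring
  rw [Finset.sum_congr rfl (fun j _ => this j), Finset.sum_add_distrib,
    Finset.sum_ite_eq' Finset.univ, Finset.sum_ite_eq' Finset.univ,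
    if_pos (Finset.mem_univ _), if_pos (Finset.mem_univ _)]
  ring

lemma x_bound (N : ℕ) (x : Fin N → ℝ) :
    ∀ n, ∀ h : n < N, |x ⟨n, h⟩| ≤ ∑ k : Fin N, |((Bmat N)ᵀ *ᵥ x) k| := by
  set y := (Bmat N)ᵀ *ᵥ x with hy
  have key : ∀ n, ∀ h : n < N,
      |x ⟨n, h⟩| ≤ ∑ k ∈ Finset.univ.filter (fun k : Fin N => (k:ℕ) ≤ n), |y k| := by
    intro n
    induction n with
    | zero =>
      intro h
      have : Finset.univ.filter (fun k : Fin N => (k:ℕ) ≤ 0) = {⟨0, h⟩} := by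
        ext k; simp [Fin.ext_iff, Nat.le_zero]
      rw [this, Finset.sum_singleton, ← y_zero N x h]
    | succ n ih =>
      intro h
      have hsplit : Finset.univ.filter (fun k : Fin N => (k:ℕ) ≤ n + 1)
          = insert (⟨n+1, h⟩ : Fin N) (Finset.univ.filter (fun k : Fin N => (k:ℕ) ≤ n)) := by
        ext k; simp [Fin.ext_iff]; omega
      rw [hsplit, Finset.sum_insert (by simp)]
      have hx : x ⟨n+1, h⟩ = y ⟨n+1, h⟩ + x ⟨n, by omega⟩ := by
        rw [hy, y_succ N x n h]; ring
      calc |x ⟨n+1, h⟩| ≤ |y ⟨n+1, h⟩| + |x ⟨n, by omega⟩| := by rw [hx]; exact abs_add_le _ _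
        _ ≤ |y ⟨n+1, h⟩| + ∑ k ∈ Finset.univ.filter (fun k : Fin N => (k:ℕ) ≤ n), |y k| :=
            add_le_add_right (ih _) _
  intro n h
  exact (key n h).trans (Finset.sum_le_sum_of_subset_of_nonneg (Finset.filter_subset _ _)
    (fun _ _ _ => abs_nonneg _))

/-- λ_min(BRBᵀ) ≥ r̲/(4N²), stated as a quadratic-form bound. -/
theorem stmt_5 (N : ℕ) (hN : 1 ≤ N)
    (rlow : ℝ) (hrlow : 0 < rlow) (r : Fin N → ℝ) (hr : ∀ i, rlow ≤ r i) :
    ∀ x : Fin N → ℝ,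
      rlow / (4 * (N : ℝ) ^ 2) * (x ⬝ᵥ x)
        ≤ x ⬝ᵥ ((Bmat N * Matrix.diagonal r * (Bmat N)ᵀ) *ᵥ x) := by
  intro x
  set y := (Bmat N)ᵀ *ᵥ x with hy
  have hrhs : x ⬝ᵥ ((Bmat N * Matrix.diagonal r * (Bmat N)ᵀ) *ᵥ x)
      = ∑ i, r i * y i ^ 2 := by
    rw [← Matrix.mulVec_mulVec, ← Matrix.mulVec_mulVec, Matrix.dotProduct_mulVec,
      ← Matrix.mulVec_transpose, ← hy]
    simp only [dotProduct, Matrix.mulVec_diagonal]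
    exact Finset.sum_congr rfl fun i _ => by ring
  rw [hrhs]
  have hL : ∀ i : Fin N, |x i| ≤ ∑ k : Fin N, |y k| := by
    intro i
    have := x_bound N x i.val i.isLt
    simpa using this
  have hsumsq : (∑ k : Fin N, |y k|) ^ 2 ≤ (N : ℝ) * ∑ k : Fin N, y k ^ 2 := by
    have := sq_sum_le_card_mul_sum_sq (s := (Finset.univ : Finset (Fin N))) (f := fun k => |y k|)
    simpa [sq_abs] using this
  have hxx : x ⬝ᵥ x ≤ (N : ℝ) ^ 2 * ∑ k : Fin N, y k ^ 2 := by
    have h1 : x ⬝ᵥ x ≤ (N : ℝ) * (∑ k : Fin N, |y k|) ^ 2 := by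
      have : x ⬝ᵥ x = ∑ i : Fin N, x i ^ 2 := by
        simp [dotProduct, sq]
      rw [this]
      calc ∑ i : Fin N, x i ^ 2 ≤ ∑ _i : Fin N, (∑ k : Fin N, |y k|) ^ 2 := by
            refine Finset.sum_le_sum fun i _ => ?_
            rw [← sq_abs (x i)]
            exact pow_le_pow_left₀ (abs_nonneg _) (hL i) 2
        _ = (N : ℝ) * (∑ k : Fin N, |y k|) ^ 2 := by
            simp [Finset.sum_const, mul_comm]
    calc x ⬝ᵥ x ≤ (N : ℝ) * (∑ k : Fin N, |y k|) ^ 2 := h1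
      _ ≤ (N : ℝ) * ((N : ℝ) * ∑ k : Fin N, y k ^ 2) :=
          mul_le_mul_of_nonneg_left hsumsq (Nat.cast_nonneg N)
      _ = (N : ℝ) ^ 2 * ∑ k : Fin N, y k ^ 2 := by ring
  have hNpos : (0 : ℝ) < (N : ℝ) ^ 2 := by positivity
  have h4 : (0 : ℝ) < 4 * (N : ℝ) ^ 2 := by positivity
  calc rlow / (4 * (N : ℝ) ^ 2) * (x ⬝ᵥ x)
      ≤ rlow / (4 * (N : ℝ) ^ 2) * ((N : ℝ) ^ 2 * ∑ k : Fin N, y k ^ 2) := by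
        exact mul_le_mul_of_nonneg_left hxx (by positivity)
    _ ≤ rlow * ∑ k : Fin N, y k ^ 2 := by
        rw [div_mul_eq_mul_div, div_le_iff₀ h4]
        have hsnn : 0 ≤ ∑ k : Fin N, y k ^ 2 :=
          Finset.sum_nonneg fun k _ => sq_nonneg _
        nlinarith [mul_nonneg hrlow.le hsnn]
    _ = ∑ k : Fin N, rlow * y k ^ 2 := Finset.mul_sum _ _ _
    _ ≤ ∑ i : Fin N, r i * y i ^ 2 :=
        Finset.sum_le_sum fun i _ => mul_le_mul_of_nonneg_right (hr i) (sq_nonneg _)
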